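/- Let φ : Γ → Γ' be a harmonic, non-degenerate morphism of M-metrised graphs. Then for every effective divisor D' ∈ Div(Γ'), the rank satisfies r(φ*(D')) ≥ r(D'). -/

import Mathlib

noncomputable section
open scoped Classical

/-! ### Groupification of a cancellative additive commutative monoid -/

variable (M : Type) [AddCancelCommMonoid M]

def gpSetoid : Setoid (M × M) where
  r p q := p.1 + q.2 = q.1 + p.2
  iseqv := by
    refine ⟨fun p => rfl, fun h => h.symm, fun {p q r} h1 h2 => ?_⟩
    have key : (p.1 + r.2) + (q.1 + q.2) = (r.1 + p.2) + (q.1 + q.2) := by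
      calc (p.1 + r.2) + (q.1 + q.2) = (p.1 + q.2) + (q.1 + r.2) := by abel
        _ = (q.1 + p.2) + (r.1 + q.2) := by rw [h1, h2]
        _ = (r.1 + p.2) + (q.1 + q.2) := by abel
    exact add_right_cancel key

/-- The groupification `M^gp` of a cancellative commutative monoid `M`:
the quotient of `M × M` by `(a,b) ~ (c,d) ↔ a + d = c + b` (think of `(a,b)` as `a - b`). -/
def Gp : Type := Quotient (gpSetoid M)

namespace Gp

variable {M}

/-- The element `a - b` of `M^gp`. -/
def mk (a b : M) : Gp M := Quotient.mk (gpSetoid M) (a, b)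

instance : Zero (Gp M) := ⟨mk 0 0⟩

instance : Add (Gp M) :=
  ⟨Quotient.map₂ (fun p q => (p.1 + q.1, p.2 + q.2)) (by
    intro p p' hp q q' hq
    show (p.1 + q.1) + (p'.2 + q'.2) = (p'.1 + q'.1) + (p.2 + q.2)
    calc (p.1 + q.1) + (p'.2 + q'.2) = (p.1 + p'.2) + (q.1 + q'.2) := by abel
      _ = (p'.1 + p.2) + (q'.1 + q.2) := by rw [hp, hq]
      _ = (p'.1 + q'.1) + (p.2 + q.2) := by abel)⟩

instance : Neg (Gp M) :=
  ⟨Quotient.map (fun p => (p.2, p.1)) (by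
    intro p p' hp
    show p.2 + p'.1 = p'.2 + p.1
    calc p.2 + p'.1 = p'.1 + p.2 := by abel
      _ = p.1 + p'.2 := hp.symm
      _ = p'.2 + p.1 := by abel)⟩

lemma mk_add_mk (a b c d : M) : mk a b + mk c d = mk (a + c) (b + d) := rfl
lemma neg_mk (a b : M) : -(mk a b) = mk b a := rfl
lemma zero_def : (0 : Gp M) = mk 0 0 := rfl

instance : AddCommGroup (Gp M) where
  add := (· + ·)
  zero := 0
  neg := Neg.neg
  nsmul := nsmulRec
  zsmul := zsmulRec
  add_assoc := by
    intro a b c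
    induction a using Quotient.inductionOn with | h a =>
    induction b using Quotient.inductionOn with | h b =>
    induction c using Quotient.inductionOn with | h c =>
    exact Quotient.sound (by
      show ((a.1 + b.1) + c.1) + (a.2 + (b.2 + c.2)) = (a.1 + (b.1 + c.1)) + ((a.2 + b.2) + c.2)
      abel)
  zero_add := by
    intro a
    induction a using Quotient.inductionOn with | h a =>
    exact Quotient.sound (by
      show (0 + a.1) + a.2 = a.1 + (0 + a.2)
      abel)
  add_zero := by
    intro a
    induction a using Quotient.inductionOn with | h a =>
    exact Quotient.sound (by
      show (a.1 + 0) + a.2 = a.1 + (a.2 + 0)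
      abel)
  neg_add_cancel := by
    intro a
    induction a using Quotient.inductionOn with | h a =>
    exact Quotient.sound (by
      show (a.2 + a.1) + 0 = 0 + (a.1 + a.2)
      abel)
  add_comm := by
    intro a b
    induction a using Quotient.inductionOn with | h a =>
    induction b using Quotient.inductionOn with | h b =>
    exact Quotient.sound (by
      show (a.1 + b.1) + (b.2 + a.2) = (b.1 + a.1) + (a.2 + b.2)
      abel)

/-- The canonical map `M → M^gp`. -/
def of : M →+ Gp M where
  toFun a := mk a 0
  map_zero' := rfl
  map_add' := by
    intro a b
    exact (Quotient.sound (by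
      show (a + b) + (0 + 0) = (a + b) + 0
      abel) : mk (a + b) 0 = mk (a + b) (0 + 0))

/-- Functoriality of groupification: a monoid homomorphism `f : M →+ N` induces
`f^gp : M^gp →+ N^gp`. -/
def map {N : Type} [AddCancelCommMonoid N] (f : M →+ N) : Gp M →+ Gp N where
  toFun := Quotient.map (fun p => (f p.1, f p.2)) (by
    intro p p' hp
    show f p.1 + f p'.2 = f p'.1 + f p.2
    rw [← f.map_add, ← f.map_add, hp])
  map_zero' := by
    show mk (f 0) (f 0) = mk 0 0
    rw [f.map_zero]
  map_add' := by
    intro a b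
    induction a using Quotient.inductionOn with | h a =>
    induction b using Quotient.inductionOn with | h b =>
    show mk (f (a.1 + b.1)) (f (a.2 + b.2)) = mk (f a.1 + f b.1) (f a.2 + f b.2)
    rw [f.map_add, f.map_add]

end Gp

/-- Sharpness: the only invertible element of `M` is `0`. -/
def Sharp : Prop := ∀ a b : M, a + b = 0 → a = 0

/-! ### Monoid-metrised graphs -/

/-- A graph (Definition 2.3 of the paper) together with a metric taking values in the
monoid `M`: `X` is the finite set of vertices and half-edges, `r` sends an element to its
root vertex, `i` is the pairing involution on half-edges, and `l` assigns a length in `M`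
to every half-edge (and `0` to every vertex). -/
structure MGraph where
  X : Type
  [finX : Fintype X]
  r : X → X
  i : X → X
  r_idem : ∀ x, r (r x) = r x
  i_invol : ∀ x, i (i x) = x
  fix_iff : ∀ x, i x = x ↔ r x = x
  l : X → M
  l_i : ∀ x, l (i x) = l x
  l_zero_iff : ∀ x, l x = 0 ↔ i x = x

attribute [instance] MGraph.finX

namespace MGraph

variable {M} (G : MGraph M)

/-- `x` is a vertex iff it is fixed by the involution. -/
def IsVertex (x : G.X) : Prop := G.i x = x

/-- `x` is a half-edge iff it is not fixed by the involution. -/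
def IsHalfEdge (x : G.X) : Prop := G.i x ≠ x

/-- The vertex set of `G`. -/
abbrev V : Type := { x : G.X // G.IsVertex x }

/-- The root of any element of `X` is a vertex. -/
def rv (x : G.X) : G.V := ⟨G.r x, (G.fix_iff (G.r x)).mpr (G.r_idem x)⟩

/-- Two vertices are adjacent if some edge joins them. -/
def Adj (u v : G.V) : Prop := ∃ x, G.IsHalfEdge x ∧ G.rv x = u ∧ G.rv (G.i x) = v

/-- `G` is connected. (All graphs in the paper are assumed connected.) -/
def IsConnected : Prop := Nonempty G.X ∧ ∀ u v : G.V, Relation.ReflTransGen G.Adj u v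

/-- The degree of a divisor `D : V → ℤ`. -/
def degD (D : G.V → ℤ) : ℤ := ∑ v, D v

/-- A divisor is effective if all its coefficients are nonnegative. -/
def Effective (D : G.V → ℤ) : Prop := ∀ v, 0 ≤ D v

/-- `g : V → M^gp` is piecewise linear if, along every half-edge, the difference of the
values of `g` at the two endpoints is an integer multiple of the length of that edge. -/
def IsPL (g : G.V → Gp M) : Prop :=
  ∀ x, G.IsHalfEdge x → ∃ n : ℤ, g (G.rv x) - g (G.rv (G.i x)) = n • Gp.of (G.l x)

/-- The (outgoing) integer slope of `g` along the half-edge `x`. -/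
def slope (g : G.V → Gp M) (x : G.X) : ℤ :=
  if h : ∃ n : ℤ, g (G.rv x) - g (G.rv (G.i x)) = n • Gp.of (G.l x) then h.choose else 0

/-- The Laplacian of a piecewise linear function. -/
def lap (g : G.V → Gp M) : G.V → ℤ :=
  fun v => ∑ x : G.X, if G.IsHalfEdge x ∧ G.r x = v.val then G.slope g x else 0

/-- Principal divisors: those of the form `Δ(g)` for a piecewise linear `g`. -/
def IsPrincipal (D : G.V → ℤ) : Prop := ∃ g, G.IsPL g ∧ G.lap g = D

/-- The rank of a divisor `D`:
`r(D) = max { k : for every effective divisor F of degree k, |D - F| ≠ ∅ }`. -/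
def rank (D : G.V → ℤ) : ℤ :=
  sSup {k : ℤ | ∀ F : G.V → ℤ, G.Effective F → G.degD F = k →
    ∃ E : G.V → ℤ, G.Effective E ∧ G.IsPrincipal (D - F - E)}

/-- The divisorial gonality: the minimal degree of a divisor of rank at least 1. -/
def dgon : ℤ := sInf {d : ℤ | ∃ D : G.V → ℤ, 1 ≤ G.rank D ∧ G.degD D = d}

end MGraph


/-! ### Morphisms of monoid-metrised graphs -/

namespace MGraph

variable {M : Type} [AddCancelCommMonoid M]

/-- A morphism of `M`-metrised graphs (Definition 3.1 of the paper): vertices map to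
vertices; a half-edge mapping to a half-edge respects roots and the target length is an
integer multiple of the source length; a half-edge collapsed to a vertex has both of its
endpoints mapped to that vertex. -/
structure Hom (G G' : MGraph M) where
  f : G.X → G'.X
  vtx : ∀ x, G.IsVertex x → G'.IsVertex (f x)
  edge : ∀ x, G.IsHalfEdge x → G'.IsHalfEdge (f x) →
    f (G.r x) = G'.r (f x) ∧ f (G.r (G.i x)) = G'.r (G'.i (f x)) ∧
      ∃ n : ℕ, G'.l (f x) = n • G.l x
  contr : ∀ x, G.IsHalfEdge x → G'.IsVertex (f x) →
    f (G.r x) = f x ∧ f (G.r (G.i x)) = f x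

namespace Hom

variable {G G' : MGraph M} (φ : Hom G G')

/-- The induced map on vertices. -/
def vmap (v : G.V) : G'.V := ⟨φ.f v.val, φ.vtx v.val v.property⟩

/-- The slope `μ_φ(x) = l'(φ(x)) / l(x)` of `φ` along a half-edge `x` (zero if `φ`
collapses `x` to a vertex). -/
def mu (x : G.X) : ℕ :=
  if h : G'.IsHalfEdge (φ.f x) ∧ ∃ n : ℕ, G'.l (φ.f x) = n • G.l x then h.2.choose else 0

/-- The multiplicity `m_{φ,v}(e') = ∑_{x ∈ H_v, φ(x) = e'} μ_φ(x)` of a half-edge `e'` of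
`G'` at a vertex `v` of `G`. -/
def multAt (v : G.V) (e' : G'.X) : ℕ :=
  ∑ x : G.X, if G.IsHalfEdge x ∧ G.r x = v.val ∧ φ.f x = e' then φ.mu x else 0

/-- `φ` is harmonic (= horizontally conformal): for every vertex `v`, all half-edges of
`G'` rooted at `φ(v)` have the same multiplicity at `v`. -/
def Harmonic : Prop :=
  ∀ (v : G.V) (e' f' : G'.X), G'.IsHalfEdge e' → G'.IsHalfEdge f' →
    G'.r e' = φ.f v.val → G'.r f' = φ.f v.val → φ.multAt v e' = φ.multAt v f'

/-- The horizontal multiplicity `m_φ(v)` of a vertex (the common value of `m_{φ,v}(e')`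
over half-edges `e'` rooted at `φ(v)`; zero if there are none). -/
def mV (v : G.V) : ℕ :=
  if h : ∃ e', G'.IsHalfEdge e' ∧ G'.r e' = φ.f v.val then φ.multAt v h.choose else 0

/-- `φ` is non-degenerate if every vertex has positive horizontal multiplicity. -/
def Nondeg : Prop := ∀ v : G.V, 0 < φ.mV v

/-- The multiplicity `m_φ(e') = ∑_{v : φ(v) = r'(e')} m_{φ,v}(e')` of a half-edge of `G'`. -/
def mE (e' : G'.X) : ℕ :=
  ∑ v : G.V, if φ.f v.val = G'.r e' then φ.multAt v e' else 0

/-- The degree of a harmonic morphism: `deg(φ) = m_φ(e')` for any half-edge `e'` of `G'`. -/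
def deg : ℕ := if h : ∃ e', G'.IsHalfEdge e' then φ.mE h.choose else 0

/-- The pullback of divisors: `φ*(D') = ∑_v D'(φ(v)) · m_φ(v) · [v]`. -/
def pullback (D' : G'.V → ℤ) : G.V → ℤ :=
  fun v => D' (φ.vmap v) * (φ.mV v : ℤ)

/-- The pushforward of divisors: `φ_*(D) = ∑_v D(v) · [φ(v)]`. -/
def pushforward (D : G.V → ℤ) : G'.V → ℤ :=
  fun v' => ∑ v : G.V, if φ.vmap v = v' then D v else 0

end Hom

/-- A cycle in `G`: a cyclic sequence of half-edges `e_0, …, e_k` in which consecutive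
half-edges are consecutive (the far endpoint of each is the root of the next) and which
never immediately backtracks. -/
def HasCycle (G : MGraph M) : Prop :=
  ∃ (k : ℕ) (e : ZMod (k + 1) → G.X), (∀ j, G.IsHalfEdge (e j)) ∧
    (∀ j, G.r (G.i (e j)) = G.r (e (j + 1))) ∧ (∀ j, e (j + 1) ≠ G.i (e j))

/-- A tree is a connected graph with no cycles. -/
def IsTree (G : MGraph M) : Prop := G.IsConnected ∧ ¬ G.HasCycle

/-- The geometric gonality of `G`: the minimal degree of a harmonic, non-degenerate
morphism from `G` onto an `M`-metrised tree, or `∞` if no such morphism exists. -/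
def ggon (G : MGraph M) : ℕ∞ :=
  sInf {d : ℕ∞ | ∃ (T : MGraph M) (φ : Hom G T),
    T.IsTree ∧ φ.Harmonic ∧ φ.Nondeg ∧ (φ.deg : ℕ∞) = d}

end MGraph

/-! ### Auxiliary lemmas for Lemma 3.9 -/

section AuxLemmas

variable {M : Type} [AddCancelCommMonoid M]

lemma Gp.of_eq_zero {a : M} (h : (Gp.of a : Gp M) = 0) : a = 0 := by
  have h2 : a + 0 = 0 + 0 := Quotient.exact h
  simpa using h2

lemma sharp_nsmul_eq_zero (hs : Sharp M) {n : ℕ} {a : M} (hn : n ≠ 0) (h : n • a = 0) :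
    a = 0 := by
  obtain ⟨k, rfl⟩ := Nat.exists_eq_succ_of_ne_zero hn
  rw [succ_nsmul] at h
  exact hs a (k • a) (by rwa [add_comm] at h)

lemma sharp_zsmul_gp_eq_zero (hs : Sharp M) {a : M} (ha : a ≠ 0) {n : ℤ}
    (h : n • (Gp.of a : Gp M) = 0) : n = 0 := by
  by_contra hn
  have hnat : n.natAbs • (Gp.of a : Gp M) = 0 := by
    rcases Int.natAbs_eq n with h' | h'
    · rw [← natCast_zsmul, ← h', h]
    · rw [← natCast_zsmul, ← neg_eq_zero, ← neg_zsmul, ← h', h]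
  rw [← map_nsmul] at hnat
  exact ha (sharp_nsmul_eq_zero hs (by omega : n.natAbs ≠ 0) (Gp.of_eq_zero hnat))

lemma sharp_zsmul_gp_inj (hs : Sharp M) {a : M} (ha : a ≠ 0) {m n : ℤ}
    (h : m • (Gp.of a : Gp M) = n • (Gp.of a : Gp M)) : m = n := by
  have h0 : (m - n) • (Gp.of a : Gp M) = 0 := by rw [sub_smul, h, sub_self]
  have := sharp_zsmul_gp_eq_zero hs ha h0
  omega

lemma sharp_nsmul_inj (hs : Sharp M) {a : M} (ha : a ≠ 0) {m n : ℕ}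
    (h : m • a = n • a) : m = n := by
  have h2 : (m : ℤ) • (Gp.of a : Gp M) = (n : ℤ) • (Gp.of a : Gp M) := by
    rw [natCast_zsmul, natCast_zsmul, ← map_nsmul, ← map_nsmul, h]
  exact_mod_cast sharp_zsmul_gp_inj hs ha h2

namespace MGraph

lemma l_ne_zero (G : MGraph M) {x : G.X} (hx : G.IsHalfEdge x) : G.l x ≠ 0 :=
  fun h => hx ((G.l_zero_iff x).mp h)

lemma halfEdge_i (G : MGraph M) {x : G.X} (hx : G.IsHalfEdge x) : G.IsHalfEdge (G.i x) := by
  intro h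
  rw [G.i_invol] at h
  exact hx h.symm

lemma slope_eq (G : MGraph M) (hs : Sharp M) {g : G.V → Gp M} {x : G.X}
    (hx : G.IsHalfEdge x) {n : ℤ}
    (h : g (G.rv x) - g (G.rv (G.i x)) = n • Gp.of (G.l x)) : G.slope g x = n := by
  have hex : ∃ m : ℤ, g (G.rv x) - g (G.rv (G.i x)) = m • Gp.of (G.l x) := ⟨n, h⟩
  rw [MGraph.slope, dif_pos hex]
  exact sharp_zsmul_gp_inj hs (G.l_ne_zero hx) (hex.choose_spec.symm.trans h)

lemma slope_i (G : MGraph M) (hs : Sharp M) {g : G.V → Gp M} (hg : G.IsPL g) {x : G.X}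
    (hx : G.IsHalfEdge x) : G.slope g (G.i x) = - G.slope g x := by
  obtain ⟨n, hn⟩ := hg x hx
  have key : g (G.rv (G.i x)) - g (G.rv (G.i (G.i x))) = (-n) • Gp.of (G.l (G.i x)) := by
    rw [G.i_invol, G.l_i, neg_smul, ← hn]
    abel
  rw [G.slope_eq hs (G.halfEdge_i hx) key, G.slope_eq hs hx hn]

lemma degD_lap (G : MGraph M) (hs : Sharp M) {g : G.V → Gp M} (hg : G.IsPL g) :
    G.degD (G.lap g) = 0 := by
  rw [MGraph.degD]
  simp only [MGraph.lap]
  rw [Finset.sum_comm]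
  have step : ∀ x : G.X,
      (∑ v : G.V, if G.IsHalfEdge x ∧ G.r x = v.val then G.slope g x else 0)
        = if G.IsHalfEdge x then G.slope g x else 0 := by
    intro x
    by_cases hx : G.IsHalfEdge x
    · rw [if_pos hx]
      have : ∀ v : G.V, (if G.IsHalfEdge x ∧ G.r x = v.val then G.slope g x else 0)
          = if v = G.rv x then G.slope g x else 0 := by
        intro v
        refine if_congr ⟨fun h => Subtype.ext h.2.symm, fun h => ⟨hx, by rw [h]; rfl⟩⟩ rfl rfl
      rw [Finset.sum_congr rfl (fun v _ => this v)]
      simp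
    · simp [hx]
  rw [Finset.sum_congr rfl (fun x _ => step x)]
  refine Finset.sum_ninvolution G.i (fun a => ?_) (fun a ha => ?_) (fun a => Finset.mem_univ _)
    G.i_invol
  · by_cases ha : G.IsHalfEdge a
    · rw [if_pos ha, if_pos (G.halfEdge_i ha), G.slope_i hs hg ha, add_neg_cancel]
    · have : ¬ G.IsHalfEdge (G.i a) := by
        simp only [MGraph.IsHalfEdge, not_not] at ha ⊢
        rw [ha]
        exact ha
      rw [if_neg ha, if_neg this, add_zero]
  · intro heq
    by_cases hx : G.IsHalfEdge a
    · exact hx heq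
    · exact ha (if_neg hx)

lemma degD_nonneg (G : MGraph M) {F : G.V → ℤ} (hF : G.Effective F) : 0 ≤ G.degD F :=
  Finset.sum_nonneg fun v _ => hF v

lemma degD_sub (G : MGraph M) (A B : G.V → ℤ) : G.degD (A - B) = G.degD A - G.degD B := by
  simp [MGraph.degD, Finset.sum_sub_distrib]

namespace Hom

variable {G G' : MGraph M} (φ : Hom G G')

lemma vmap_rv {x : G.X} {y : G'.X} (h : φ.f (G.r x) = G'.r y) :
    φ.vmap (G.rv x) = G'.rv y := Subtype.ext h

lemma mu_eq (hs : Sharp M) {x : G.X} {n : ℕ} (hx : G.IsHalfEdge x)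
    (hfx : G'.IsHalfEdge (φ.f x)) (hl : G'.l (φ.f x) = n • G.l x) : φ.mu x = n := by
  have hex : G'.IsHalfEdge (φ.f x) ∧ ∃ m : ℕ, G'.l (φ.f x) = m • G.l x := ⟨hfx, n, hl⟩
  rw [Hom.mu, dif_pos hex]
  exact sharp_nsmul_inj hs (G.l_ne_zero hx) (hex.2.choose_spec.symm.trans hl)

lemma diff_comp (hs : Sharp M) {g' : G'.V → Gp M} (hg' : G'.IsPL g') {x : G.X}
    (hx : G.IsHalfEdge x) :
    (fun v => g' (φ.vmap v)) (G.rv x) - (fun v => g' (φ.vmap v)) (G.rv (G.i x))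
      = (if G'.IsHalfEdge (φ.f x) then G'.slope g' (φ.f x) * (φ.mu x : ℤ) else 0)
          • Gp.of (G.l x) := by
  by_cases hfx : G'.IsHalfEdge (φ.f x)
  · obtain ⟨h1, h2, n, hn⟩ := φ.edge x hx hfx
    obtain ⟨m, hm⟩ := hg' (φ.f x) hfx
    rw [if_pos hfx, G'.slope_eq hs hfx hm, φ.mu_eq hs hx hfx hn]
    show g' (φ.vmap (G.rv x)) - g' (φ.vmap (G.rv (G.i x))) = _
    rw [φ.vmap_rv h1, φ.vmap_rv h2, hm, hn, map_nsmul, mul_smul, natCast_zsmul]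
  · have hv : G'.IsVertex (φ.f x) := by
      simp only [MGraph.IsHalfEdge, not_not] at hfx
      exact hfx
    obtain ⟨h1, h2⟩ := φ.contr x hx hv
    rw [if_neg hfx]
    show g' (φ.vmap (G.rv x)) - g' (φ.vmap (G.rv (G.i x))) = _
    have : φ.vmap (G.rv x) = φ.vmap (G.rv (G.i x)) := Subtype.ext (h1.trans h2.symm)
    rw [this, sub_self, zero_smul]

lemma isPL_comp (hs : Sharp M) {g' : G'.V → Gp M} (hg' : G'.IsPL g') :
    G.IsPL (fun v => g' (φ.vmap v)) :=
  fun x hx => ⟨_, φ.diff_comp hs hg' hx⟩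

lemma slope_comp (hs : Sharp M) {g' : G'.V → Gp M} (hg' : G'.IsPL g') {x : G.X}
    (hx : G.IsHalfEdge x) :
    G.slope (fun v => g' (φ.vmap v)) x
      = if G'.IsHalfEdge (φ.f x) then G'.slope g' (φ.f x) * (φ.mu x : ℤ) else 0 :=
  G.slope_eq hs hx (φ.diff_comp hs hg' hx)

lemma multAt_eq_mV {v : G.V} {e' : G'.X} (hφ : φ.Harmonic) (he' : G'.IsHalfEdge e')
    (h : G'.r e' = φ.f v.val) : φ.multAt v e' = φ.mV v := by
  have hex : ∃ x', G'.IsHalfEdge x' ∧ G'.r x' = φ.f v.val := ⟨e', he', h⟩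
  rw [Hom.mV, dif_pos hex]
  exact hφ v e' hex.choose he' hex.choose_spec.1 h hex.choose_spec.2

lemma lap_comp (hs : Sharp M) (hφ : φ.Harmonic) {g' : G'.V → Gp M} (hg' : G'.IsPL g') :
    G.lap (fun v => g' (φ.vmap v)) = φ.pullback (G'.lap g') := by
  funext v
  rw [MGraph.lap]
  have step1 : ∀ x : G.X,
      (if G.IsHalfEdge x ∧ G.r x = v.val then G.slope (fun w => g' (φ.vmap w)) x else 0)
        = ∑ e' : G'.X, (if G.IsHalfEdge x ∧ G.r x = v.val ∧ φ.f x = e' ∧ G'.IsHalfEdge e'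
            then G'.slope g' e' * (φ.mu x : ℤ) else 0) := by
    intro x
    by_cases hc : G.IsHalfEdge x ∧ G.r x = v.val
    · rw [if_pos hc, φ.slope_comp hs hg' hc.1]
      rw [Finset.sum_eq_single (φ.f x)]
      · by_cases hfx : G'.IsHalfEdge (φ.f x)
        · rw [if_pos hfx, if_pos ⟨hc.1, hc.2, rfl, hfx⟩]
        · rw [if_neg hfx, if_neg (by tauto)]
      · intro b _ hb
        rw [if_neg (by tauto)]
      · intro h
        exact absurd (Finset.mem_univ _) h
    · rw [if_neg hc]
      symm
      exact Finset.sum_eq_zero fun e' _ => if_neg (by tauto)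
  rw [Finset.sum_congr rfl (fun x _ => step1 x), Finset.sum_comm]
  have step2 : ∀ e' : G'.X,
      (∑ x : G.X, if G.IsHalfEdge x ∧ G.r x = v.val ∧ φ.f x = e' ∧ G'.IsHalfEdge e'
          then G'.slope g' e' * (φ.mu x : ℤ) else 0)
        = (if G'.IsHalfEdge e' ∧ G'.r e' = φ.f v.val then G'.slope g' e' else 0)
            * (φ.mV v : ℤ) := by
    intro e'
    by_cases hce : G'.IsHalfEdge e' ∧ G'.r e' = φ.f v.val
    · rw [if_pos hce, ← φ.multAt_eq_mV hφ hce.1 hce.2, Hom.multAt, Nat.cast_sum,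
        Finset.mul_sum]
      refine Finset.sum_congr rfl fun x _ => ?_
      by_cases hcx : G.IsHalfEdge x ∧ G.r x = v.val ∧ φ.f x = e'
      · rw [if_pos ⟨hcx.1, hcx.2.1, hcx.2.2, hce.1⟩, if_pos hcx]
      · rw [if_neg (by tauto), if_neg hcx]
        simp
    · rw [if_neg hce, zero_mul]
      refine Finset.sum_eq_zero fun x _ => ?_
      rw [if_neg]
      rintro ⟨hx, hr, hfe, he'⟩
      refine hce ⟨he', ?_⟩
      have := (φ.edge x hx (hfe ▸ he')).1
      rw [hr] at this
      rw [← hfe, ← this]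
  rw [Finset.sum_congr rfl (fun e' _ => step2 e'), ← Finset.sum_mul]
  rfl

lemma degD_pushforward (F : G.V → ℤ) : G'.degD (φ.pushforward F) = G.degD F := by
  rw [MGraph.degD, MGraph.degD]
  simp only [Hom.pushforward]
  rw [Finset.sum_comm]
  refine Finset.sum_congr rfl fun v _ => ?_
  simp

lemma pushforward_effective {F : G.V → ℤ} (hF : G.Effective F) :
    G'.Effective (φ.pushforward F) := by
  intro v'
  refine Finset.sum_nonneg fun v _ => ?_
  split_ifs
  · exact hF v
  · exact le_refl 0

lemma pullback_effective {D : G'.V → ℤ} (hD : G'.Effective D) :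
    G.Effective (φ.pullback D) :=
  fun v => mul_nonneg (hD _) (Int.natCast_nonneg _)

lemma le_pullback_pushforward (hnd : φ.Nondeg) {F : G.V → ℤ} (hF : G.Effective F)
    (v : G.V) : F v ≤ φ.pullback (φ.pushforward F) v := by
  have h1 : F v ≤ φ.pushforward F (φ.vmap v) := by
    have := Finset.single_le_sum
      (f := fun w : G.V => if φ.vmap w = φ.vmap v then F w else 0)
      (fun w _ => by split_ifs; exacts [hF w, le_refl 0]) (Finset.mem_univ v)
    simpa [Hom.pushforward] using this
  have h2 : (1 : ℤ) ≤ (φ.mV v : ℤ) := by exact_mod_cast hnd v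
  calc F v = F v * 1 := (mul_one _).symm
    _ ≤ φ.pushforward F (φ.vmap v) * (φ.mV v : ℤ) :=
        mul_le_mul h1 h2 zero_le_one ((hF v).trans h1)
    _ = φ.pullback (φ.pushforward F) v := rfl

end Hom

end MGraph

end AuxLemmas

/-- **Lemma 3.9.** Let `φ : Γ → Γ'` be a harmonic, non-degenerate morphism of
`M`-metrised graphs. Then for every effective divisor `D'` on `Γ'` we have
`r(φ*(D')) ≥ r(D')`. -/
theorem MGraph.Hom.rank_pullback_ge (M : Type) [AddCancelCommMonoid M]
    (hsharp : Sharp M) (G G' : MGraph M) (hG : G.IsConnected) (hG' : G'.IsConnected)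
    (φ : MGraph.Hom G G') (hφ : φ.Harmonic) (hnd : φ.Nondeg)
    (D' : G'.V → ℤ) (hD' : G'.Effective D') :
    G'.rank D' ≤ G.rank (φ.pullback D') := by
  rw [MGraph.rank, MGraph.rank]
  refine csSup_le_csSup ?_ ?_ ?_
  · -- bounded above
    refine ⟨max (G.degD (φ.pullback D')) 0, fun k hk => ?_⟩
    by_contra hlt
    push_neg at hlt
    obtain ⟨x0⟩ := hG.1
    set v0 : G.V := G.rv x0 with hv0
    have hk0 : 0 ≤ k := le_of_lt (lt_of_le_of_lt (le_max_right _ _) hlt)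
    have hkd : G.degD (φ.pullback D') < k := lt_of_le_of_lt (le_max_left _ _) hlt
    obtain ⟨E, hE, g, hgPL, hlapg⟩ := hk (fun v => if v = v0 then k else 0)
      (fun v => by dsimp only; split_ifs; exacts [hk0, le_refl 0])
      (by simp [MGraph.degD])
    have hdeg0 : G.degD (G.lap g) = 0 := G.degD_lap hsharp hgPL
    rw [hlapg, G.degD_sub, G.degD_sub] at hdeg0
    have hdegF : G.degD (fun v => if v = v0 then k else 0) = k := by simp [MGraph.degD]
    have hEnn : 0 ≤ G.degD E := G.degD_nonneg hE
    rw [hdegF] at hdeg0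
    omega
  · -- nonempty
    refine ⟨-1, fun F' hF' hdeg => ?_⟩
    have := G'.degD_nonneg hF'
    omega
  · -- subset
    intro k hk F hF hdegF
    obtain ⟨E', hE', g', hg'PL, hlap'⟩ := hk (φ.pushforward F) (φ.pushforward_effective hF)
      (by rw [φ.degD_pushforward]; exact hdegF)
    refine ⟨φ.pullback E' + (φ.pullback (φ.pushforward F) - F), fun v => ?_, ?_⟩
    · exact add_nonneg (φ.pullback_effective hE' v)
        (sub_nonneg.mpr (φ.le_pullback_pushforward hnd hF v))
    · refine ⟨fun v => g' (φ.vmap v), φ.isPL_comp hsharp hg'PL, ?_⟩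
      rw [φ.lap_comp hsharp hφ hg'PL, hlap']
      funext v
      simp only [MGraph.Hom.pullback, Pi.sub_apply, Pi.add_apply]
      ring


end
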